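/- For every integer n ≥ 2, φ is differentiable at 1 − 1/n with derivative φ'(1 − 1/n) = 0. -/

import Mathlib

noncomputable section

/-- `φ(ε) = (n−1)^{−1/2}·ε^{1/2}·(1−ε)^{1/2}
      + (n−1)^{1/(2(n−1))}·(1−ε)^{1/(2(n−1))}·ε^{1−1/(2(n−1))}` (real powers). -/
def phi (n : ℕ) (ε : ℝ) : ℝ :=
  ((n : ℝ) - 1) ^ (-(1 / 2) : ℝ) * ε ^ ((1 : ℝ) / 2) * (1 - ε) ^ ((1 : ℝ) / 2) +
    ((n : ℝ) - 1) ^ (1 / (2 * ((n : ℝ) - 1))) * (1 - ε) ^ (1 / (2 * ((n : ℝ) - 1))) *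
      ε ^ (1 - 1 / (2 * ((n : ℝ) - 1)))

/-- `φ` is differentiable at `1 − 1/n` with derivative `0` there. -/
theorem stmt6 (n : ℕ) (hn : 2 ≤ n) : HasDerivAt (phi n) 0 (1 - 1 / (n : ℝ)) := by
  have hn2 : (2 : ℝ) ≤ (n : ℝ) := by exact_mod_cast hn
  have hn0 : (0 : ℝ) < (n : ℝ) := by linarith
  set a : ℝ := (n : ℝ) - 1 with ha_def
  set b : ℝ := 1 / (2 * a) with hb_def
  set x : ℝ := 1 - 1 / (n : ℝ) with hx_def
  have ha0 : 0 < a := by simp only [ha_def]; linarith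
  have hx : 0 < x := by
    have h : 1 / (n : ℝ) < 1 := by rw [div_lt_one hn0]; linarith
    simp only [hx_def]; linarith
  have h1x : 0 < 1 - x := by
    simp only [hx_def]
    have : 0 < 1 / (n : ℝ) := by positivity
    linarith
  have h1xe : 1 - x = x * a⁻¹ := by
    simp only [hx_def, ha_def]
    field_simp
    try ring
    have hne : (-1 + (n:ℝ)) ≠ 0 := by intro h; linarith
    rw [← sub_one_mul, show (n:ℝ) - 1 = -1 + n by ring, mul_inv_cancel₀ hne]
  -- pieces
  have hc1 : HasDerivAt (fun ε : ℝ => a ^ (-(1 / 2) : ℝ) * ε ^ ((1 : ℝ) / 2))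
      (a ^ (-(1 / 2) : ℝ) * ((1 / 2 : ℝ) * x ^ ((1 : ℝ) / 2 - 1))) x :=
    (Real.hasDerivAt_rpow_const (Or.inl hx.ne')).const_mul _
  have hsub : HasDerivAt (fun ε : ℝ => 1 - ε) (-1 : ℝ) x := by
    simpa using (hasDerivAt_id x).const_sub 1
  have hc2 : HasDerivAt (fun ε : ℝ => (1 - ε) ^ ((1 : ℝ) / 2))
      ((-1 : ℝ) * ((1 : ℝ) / 2) * (1 - x) ^ ((1 : ℝ) / 2 - 1)) x :=
    hsub.rpow_const (Or.inl h1x.ne')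
  have hT1 := hc1.mul hc2
  have hc3 : HasDerivAt (fun ε : ℝ => a ^ b * (1 - ε) ^ b)
      (a ^ b * ((-1 : ℝ) * b * (1 - x) ^ (b - 1))) x :=
    (hsub.rpow_const (Or.inl h1x.ne')).const_mul _
  have hc4 : HasDerivAt (fun ε : ℝ => ε ^ (1 - b)) ((1 - b) * x ^ (1 - b - 1)) x :=
    Real.hasDerivAt_rpow_const (Or.inl hx.ne')
  have hT2 := hc3.mul hc4
  have hphi := hT1.add hT2
  have heq : phi n = fun ε : ℝ =>
      (a ^ (-(1 / 2) : ℝ) * ε ^ ((1 : ℝ) / 2)) * (1 - ε) ^ ((1 : ℝ) / 2) +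
      (a ^ b * (1 - ε) ^ b) * ε ^ (1 - b) := by
    funext ε
    simp only [phi, ha_def, hb_def]
    try ring
  rw [heq]
  refine hphi.congr_deriv ?_
  symm
  -- now prove 0 = derivative value
  have hxp : ∀ p : ℝ, (1 - x) ^ p = x ^ p * a ^ (-p) := by
    intro p
    rw [h1xe, Real.mul_rpow hx.le (inv_nonneg.2 ha0.le), Real.inv_rpow ha0.le,
      ← Real.rpow_neg ha0.le]
  rw [hxp ((1:ℝ)/2), hxp ((1:ℝ)/2 - 1), hxp (b-1), hxp b]
  have hxsub : ∀ p : ℝ, x ^ (p - 1) = x ^ p / x := fun p => by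
    rw [Real.rpow_sub hx, Real.rpow_one]
  have hasub : ∀ p : ℝ, a ^ (p - 1) = a ^ p / a := fun p => by
    rw [Real.rpow_sub ha0, Real.rpow_one]
  have haneg : ∀ p : ℝ, a ^ (-p) = (a ^ p)⁻¹ := fun p => Real.rpow_neg ha0.le p
  have hxneg : ∀ p : ℝ, x ^ (-p) = (x ^ p)⁻¹ := fun p => Real.rpow_neg hx.le p
  have hx1b : x ^ (1 - b) = x / x ^ b := by
    rw [Real.rpow_sub hx, Real.rpow_one]
  have ha1b : a ^ (1 - b) = a / a ^ b := by
    rw [Real.rpow_sub ha0, Real.rpow_one]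
  rw [show (1 : ℝ) - b - 1 = -b by ring, show -(b - 1) = 1 - b by ring,
    show (-((1:ℝ)/2 - 1)) = (1:ℝ)/2 by ring]
  rw [hxsub ((1:ℝ)/2), hxsub b, ha1b, hx1b, haneg ((1:ℝ)/2), hxneg b, haneg b]
  set u : ℝ := x ^ ((1 : ℝ) / 2) with hu_def
  set v : ℝ := x ^ b with hv_def
  set s : ℝ := a ^ ((1 : ℝ) / 2) with hs_def
  set t : ℝ := a ^ b with ht_def
  have hu0 : 0 < u := Real.rpow_pos_of_pos hx _
  have hv0 : 0 < v := Real.rpow_pos_of_pos hx _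
  have hs0 : 0 < s := Real.rpow_pos_of_pos ha0 _
  have ht0 : 0 < t := Real.rpow_pos_of_pos ha0 _
  have hu2 : u * u = x := by
    rw [hu_def, ← Real.rpow_add hx]; norm_num
  have hs2 : s * s = a := by
    rw [hs_def, ← Real.rpow_add ha0]; norm_num
  have hb : b * (2 * a) = 1 := by
    rw [hb_def]; field_simp
  have e1 : s⁻¹ * (1 / 2 * (u / x)) * (u * s⁻¹) + s⁻¹ * u * (-1 * (1 / 2) * (u / x * s)) = 1 / (2 * a) - 1 / 2 := by
    rw [← hs2, ← hu2]; field_simp; ring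
  have e2 : t * (-1 * b * (v / x * (a / t))) * (x / v) + t * (v * t⁻¹) * ((1 - b) * v⁻¹) = 1 - b * (a + 1) := by
    field_simp; ring
  rw [e1, e2, hb_def]; field_simp; ring
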